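/- Let φ(x) = Γ(x−1+i)/(√π · Γ(x−i)), where Γ is the complex Gamma function. Then the integer translates of φ form an orthonormal system in L²(ℝ): for all integers m, n, ∫_ℝ φ(x−n) · conj(φ(x−m)) dx equals 1 if m = n and 0 otherwise. -/

import Mathlib

open Complex Real MeasureTheory ComplexConjugate

open Filter Finset Topology


lemma aux_sub_ne (a : ℂ) (ha : a.im ≠ 0) (x : ℝ) : (x : ℂ) - a ≠ 0 := by
  intro h
  apply ha
  have := congrArg Complex.im h
  simpa using this.symm

lemma aux_slit {u v : ℂ} (hu : 0 < u.im) (hv : 0 < v.im) : u / v ∈ Complex.slitPlane := by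
  rcases eq_or_ne (u / v).im 0 with h | h
  · left
    have hv0 : v ≠ 0 := fun h0 => by simp [h0] at hv
    have huv : u = (u / v) * v := by field_simp
    have him : u.im = (u / v).re * v.im := by
      conv_lhs => rw [huv]
      rw [Complex.mul_im, h]; ring
    have : 0 < (u / v).re * v.im := him ▸ hu
    rcases mul_pos_iff.mp this with ⟨h1, _⟩ | ⟨_, h2⟩
    · exact h1
    · linarith
  · right; exact h

lemma aux_normSq_lower (a : ℂ) (ha : a.im ≠ 0) (x : ℝ) :
    1 + x ^ 2 ≤ ((1 + 2 * a.re ^ 2 + 2 * a.im ^ 2) / a.im ^ 2) * Complex.normSq ((x : ℂ) - a) := by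
  have hq : 0 < a.im ^ 2 := by positivity
  have hns : Complex.normSq ((x : ℂ) - a) = (x - a.re) ^ 2 + a.im ^ 2 := by
    simp [Complex.normSq_apply]; ring
  rw [hns, div_mul_eq_mul_div, le_div_iff₀ hq]
  nlinarith [sq_nonneg (x - 2 * a.re), sq_nonneg (x - a.re), sq_nonneg a.im]

lemma aux_integrable_pair (a b : ℂ) (ha : a.im ≠ 0) (hb : b.im ≠ 0) :
    Integrable (fun x : ℝ => 1 / ((x : ℂ) - a) - 1 / ((x : ℂ) - b)) := by
  set Ca := (1 + 2 * a.re ^ 2 + 2 * a.im ^ 2) / a.im ^ 2 with hCa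
  set Cb := (1 + 2 * b.re ^ 2 + 2 * b.im ^ 2) / b.im ^ 2 with hCb
  have hCa0 : 0 < Ca := by rw [hCa]; positivity
  have hCb0 : 0 < Cb := by rw [hCb]; positivity
  set D := Real.sqrt (Ca * Cb) with hD
  have hD0 : 0 < D := Real.sqrt_pos.mpr (by positivity)
  have hcont : Continuous (fun x : ℝ => 1 / ((x : ℂ) - a) - 1 / ((x : ℂ) - b)) := by
    apply Continuous.sub
    · exact continuous_const.div (by continuity) (fun x => aux_sub_ne a ha x)
    · exact continuous_const.div (by continuity) (fun x => aux_sub_ne b hb x)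
  refine ((integrable_inv_one_add_sq.const_mul (‖a - b‖ * D)).mono'
    hcont.aestronglyMeasurable (Filter.Eventually.of_forall fun x => ?_))
  have hxa := aux_sub_ne a ha x
  have hxb := aux_sub_ne b hb x
  have hA : 0 < ‖(x : ℂ) - a‖ := norm_pos_iff.mpr hxa
  have hB : 0 < ‖(x : ℂ) - b‖ := norm_pos_iff.mpr hxb
  have hu : (0:ℝ) < 1 + x ^ 2 := by positivity
  -- lower bound on product of norms
  have hA2 : 1 + x ^ 2 ≤ Ca * ‖(x : ℂ) - a‖ ^ 2 := by
    have := aux_normSq_lower a ha x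
    rwa [← Complex.sq_norm] at this
  have hB2 : 1 + x ^ 2 ≤ Cb * ‖(x : ℂ) - b‖ ^ 2 := by
    have := aux_normSq_lower b hb x
    rwa [← Complex.sq_norm] at this
  have hprod : 1 + x ^ 2 ≤ D * (‖(x : ℂ) - a‖ * ‖(x : ℂ) - b‖) := by
    have hsq : (1 + x ^ 2) ^ 2 ≤ (D * (‖(x : ℂ) - a‖ * ‖(x : ℂ) - b‖)) ^ 2 := by
      have hD2 : D ^ 2 = Ca * Cb := Real.sq_sqrt (by positivity)
      have := mul_le_mul hA2 hB2 hu.le (by positivity)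
      calc (1 + x ^ 2) ^ 2 = (1 + x ^ 2) * (1 + x ^ 2) := by ring
        _ ≤ Ca * ‖(x : ℂ) - a‖ ^ 2 * (Cb * ‖(x : ℂ) - b‖ ^ 2) := this
        _ = (D * (‖(x : ℂ) - a‖ * ‖(x : ℂ) - b‖)) ^ 2 := by rw [mul_pow, hD2]; ring
    exact (pow_le_pow_iff_left₀ hu.le (by positivity) (by norm_num)).mp hsq
  -- rewrite the function as a single quotient
  have hrw : 1 / ((x : ℂ) - a) - 1 / ((x : ℂ) - b) = (a - b) / (((x : ℂ) - a) * ((x : ℂ) - b)) := by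
    field_simp
    ring
  rw [hrw]
  have : ‖(a - b) / (((x : ℂ) - a) * ((x : ℂ) - b))‖
      = ‖a - b‖ / (‖(x : ℂ) - a‖ * ‖(x : ℂ) - b‖) := by
    rw [norm_div, norm_mul]
  rw [this]
  calc ‖a - b‖ / (‖(x : ℂ) - a‖ * ‖(x : ℂ) - b‖)
      ≤ ‖a - b‖ / ((1 + x ^ 2) / D) := by
        apply div_le_div_of_nonneg_left (norm_nonneg _) (by positivity)
        rwa [div_le_iff₀ hD0, mul_comm]
    _ = ‖a - b‖ * D * (1 + x ^ 2)⁻¹ := by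
        rw [div_div_eq_mul_div, div_eq_mul_inv]

lemma aux_tendsto_ratio (a b : ℂ) (hb : b.im ≠ 0) (l : Filter ℝ)
    (hl : Tendsto (fun x : ℝ => |x - b.re|) l atTop) :
    Tendsto (fun x : ℝ => ((x : ℂ) - a) / ((x : ℂ) - b)) l (𝓝 1) := by
  have key : Tendsto (fun x : ℝ => (b - a) / ((x : ℂ) - b)) l (𝓝 0) := by
    rw [tendsto_zero_iff_norm_tendsto_zero]
    have hbound : ∀ᶠ x : ℝ in l, ‖(b - a) / ((x : ℂ) - b)‖ ≤ ‖b - a‖ / |x - b.re| := by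
      filter_upwards [hl.eventually_ge_atTop 1] with x hx
      rw [norm_div]
      apply div_le_div_of_nonneg_left (norm_nonneg _) (by linarith)
      calc |x - b.re| = |((x : ℂ) - b).re| := by norm_num
        _ ≤ ‖(x : ℂ) - b‖ := Complex.abs_re_le_norm _
        _ = ‖(x : ℂ) - b‖ := rfl
    have hto : Tendsto (fun x : ℝ => ‖b - a‖ / |x - b.re|) l (𝓝 0) :=
      tendsto_const_nhds.div_atTop hl
    exact squeeze_zero' (Filter.Eventually.of_forall fun x => norm_nonneg _) hbound hto
  have heq : ∀ x : ℝ, ((x : ℂ) - a) / ((x : ℂ) - b) = 1 + (b - a) / ((x : ℂ) - b) := by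
    intro x
    have := aux_sub_ne b hb x
    field_simp
    ring
  simp_rw [heq]
  simpa using tendsto_const_nhds.add key

lemma aux_integral_pair (a b : ℂ) (ha : a.im < 0) (hb : b.im < 0) :
    ∫ x : ℝ, (1 / ((x : ℂ) - a) - 1 / ((x : ℂ) - b)) = 0 := by
  have ha' : a.im ≠ 0 := ha.ne
  have hb' : b.im ≠ 0 := hb.ne
  have hderiv : ∀ x : ℝ, HasDerivAt (fun y : ℝ => Complex.log (((y : ℂ) - a) / ((y : ℂ) - b)))
      (1 / ((x : ℂ) - a) - 1 / ((x : ℂ) - b)) x := by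
    intro x
    have hxa := aux_sub_ne a ha' x
    have hxb := aux_sub_ne b hb' x
    have hg : HasDerivAt (fun w : ℂ => (w - a) / (w - b))
        ((1 * ((x : ℂ) - b) - ((x : ℂ) - a) * 1) / ((x : ℂ) - b) ^ 2) (x : ℂ) :=
      ((hasDerivAt_id _).sub_const a).div ((hasDerivAt_id _).sub_const b) hxb
    have hslit : ((x : ℂ) - a) / ((x : ℂ) - b) ∈ Complex.slitPlane := by
      apply aux_slit <;> simp [ha, hb] <;> linarith
    have hlog := (Complex.hasDerivAt_log hslit).comp (x : ℂ) hg
    have := hlog.comp_ofReal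
    convert this using 1
    · rfl
    have hq : (((x : ℂ) - a) / ((x : ℂ) - b)) ≠ 0 :=
      div_ne_zero hxa hxb
    field_simp
  have htop : Tendsto (fun x : ℝ => Complex.log (((x : ℂ) - a) / ((x : ℂ) - b))) atTop (𝓝 0) := by
    have h1 : Tendsto (fun x : ℝ => |x - b.re|) atTop atTop :=
      tendsto_abs_atTop_atTop.comp (tendsto_atTop_add_const_right _ (-b.re) tendsto_id)
    have := (continuousAt_clog Complex.one_mem_slitPlane).tendsto.comp
      (aux_tendsto_ratio a b hb' atTop h1)
    simpa [Complex.log_one, Function.comp_def] using this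
  have hbot : Tendsto (fun x : ℝ => Complex.log (((x : ℂ) - a) / ((x : ℂ) - b))) atBot (𝓝 0) := by
    have h1 : Tendsto (fun x : ℝ => |x - b.re|) atBot atTop :=
      tendsto_abs_atBot_atTop.comp (tendsto_atBot_add_const_right _ (-b.re) tendsto_id)
    have := (continuousAt_clog Complex.one_mem_slitPlane).tendsto.comp
      (aux_tendsto_ratio a b hb' atBot h1)
    simpa [Complex.log_one, Function.comp_def] using this
  have := MeasureTheory.integral_of_hasDerivAt_of_tendsto hderiv
    (aux_integrable_pair a b ha' hb') hbot htop
  simpa using this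

open Polynomial in
lemma aux_partial_fractions (s : Finset ℕ) (hs : s.Nonempty) (v : ℕ → ℂ)
    (hvs : Set.InjOn v s) (him : ∀ j ∈ s, (v j).im < 0)
    (Np : ℂ[X]) (hdeg : Np.degree < ((s.card - 1 : ℕ) : WithBot ℕ)) :
    ∫ t : ℝ, Np.eval (t : ℂ) / ∏ j ∈ s, ((t : ℂ) - v j) = 0 := by
  classical
  set c : ℕ → ℂ := fun j => Np.eval (v j) / ∏ i ∈ s.erase j, (v j - v i) with hc
  have hprod_ne : ∀ j ∈ s, ∏ i ∈ s.erase j, (v j - v i) ≠ 0 := by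
    intro j hj
    rw [Finset.prod_ne_zero_iff]
    intro i hi
    rcases Finset.mem_erase.mp hi with ⟨hij, his⟩
    exact sub_ne_zero_of_ne fun h => hij (hvs his hj h.symm)
  -- the polynomial identity
  set g : ℂ[X] := ∑ j ∈ s, C (c j) * ∏ i ∈ s.erase j, (X - C (v i)) with hg
  have hdeg_term : ∀ j ∈ s, (C (c j) * ∏ i ∈ s.erase j, (X - C (v i))).degree
      ≤ ((s.card - 1 : ℕ) : WithBot ℕ) := by
    intro j hj
    calc (C (c j) * ∏ i ∈ s.erase j, (X - C (v i))).degree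
        ≤ (C (c j)).degree + (∏ i ∈ s.erase j, (X - C (v i))).degree := degree_mul_le _ _
      _ ≤ 0 + ((s.card - 1 : ℕ) : WithBot ℕ) := by
          apply add_le_add degree_C_le
          calc (∏ i ∈ s.erase j, (X - C (v i))).degree
              ≤ ∑ i ∈ s.erase j, (X - C (v i)).degree := degree_prod_le _ _
            _ ≤ ∑ i ∈ s.erase j, (1 : WithBot ℕ) := by
                apply Finset.sum_le_sum
                intro i _
                exact (degree_X_sub_C _).le
            _ = ((s.card - 1 : ℕ) : WithBot ℕ) := by
                rw [Finset.sum_const, Finset.card_erase_of_mem hj]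
                simp [nsmul_eq_mul, mul_one]
      _ = ((s.card - 1 : ℕ) : WithBot ℕ) := by rw [zero_add]
  have hdeg_g : g.degree ≤ ((s.card - 1 : ℕ) : WithBot ℕ) :=
    (degree_sum_le _ _).trans (Finset.sup_le hdeg_term)
  have hcard : ((s.card - 1 : ℕ) : WithBot ℕ) < (s.card : WithBot ℕ) := by
    rw [Nat.cast_lt]
    exact Nat.sub_lt (Finset.card_pos.mpr hs) one_pos
  have hNg : Np = g := by
    apply Polynomial.eq_of_degrees_lt_of_eval_index_eq s hvs (hdeg.trans hcard)
      (lt_of_le_of_lt hdeg_g hcard)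
    intro j hj
    rw [hg, eval_finset_sum]
    rw [Finset.sum_eq_single j]
    · rw [eval_mul, eval_C, eval_prod]
      simp_rw [eval_sub, eval_X, eval_C]
      rw [hc]
      exact (div_mul_cancel₀ _ (hprod_ne j hj)).symm
    · intro i his hij
      rw [eval_mul, eval_prod]
      have : j ∈ s.erase i := Finset.mem_erase.mpr ⟨fun h => hij h.symm, hj⟩
      rw [Finset.prod_eq_zero this (by simp), mul_zero]
    · intro h; exact absurd hj h
  -- sum of residues is zero
  have hcsum : ∑ j ∈ s, c j = 0 := by
    have h1 : Np.coeff (s.card - 1) = 0 := Polynomial.coeff_eq_zero_of_degree_lt hdeg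
    have h2 : g.coeff (s.card - 1) = ∑ j ∈ s, c j := by
      rw [hg, finset_sum_coeff]
      apply Finset.sum_congr rfl
      intro j hj
      rw [coeff_C_mul]
      have hmonic : (∏ i ∈ s.erase j, (X - C (v i))).Monic :=
        monic_prod_of_monic _ _ fun i _ => monic_X_sub_C _
      have hnd : (∏ i ∈ s.erase j, (X - C (v i))).natDegree = s.card - 1 := by
        rw [natDegree_prod _ _ fun i _ => X_sub_C_ne_zero _]
        simp [natDegree_X_sub_C, Finset.card_erase_of_mem hj]
      rw [← hnd, hmonic.coeff_natDegree, mul_one]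
    rw [hNg] at h1
    rw [h1] at h2
    exact h2.symm
  -- pointwise identity with paired terms
  have hpt : ∀ t : ℝ, Np.eval (t : ℂ) / ∏ j ∈ s, ((t : ℂ) - v j)
      = ∑ j ∈ s, c j * (1 / ((t : ℂ) - v j) - 1 / ((t : ℂ) - (-I))) := by
    intro t
    have hne : ∀ j ∈ s, (t : ℂ) - v j ≠ 0 := fun j hj => aux_sub_ne _ (him j hj).ne t
    have hsplit : ∑ j ∈ s, c j * (1 / ((t : ℂ) - v j) - 1 / ((t : ℂ) - (-I)))
        = ∑ j ∈ s, c j * (1 / ((t : ℂ) - v j)) := by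
      simp_rw [mul_sub]
      rw [Finset.sum_sub_distrib, ← Finset.sum_mul, hcsum, zero_mul, sub_zero]
    rw [hsplit]
    have heval : Np.eval (t : ℂ) = ∑ j ∈ s, c j * ∏ i ∈ s.erase j, ((t : ℂ) - v i) := by
      conv_lhs => rw [hNg]
      rw [hg, eval_finset_sum]
      apply Finset.sum_congr rfl
      intro j hj
      rw [eval_mul, eval_C, eval_prod]
      simp_rw [eval_sub, eval_X, eval_C]
    rw [heval, Finset.sum_div]
    apply Finset.sum_congr rfl
    intro j hj
    rw [← Finset.mul_prod_erase s _ hj]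
    rw [mul_div_assoc, mul_one_div]
    congr 1
    rw [mul_comm, ← div_div]
    rw [div_self (Finset.prod_ne_zero_iff.mpr fun i hi => hne i (Finset.mem_of_mem_erase hi))]
    exact one_div _
  rw [MeasureTheory.integral_congr_ae (Filter.Eventually.of_forall hpt)]
  rw [MeasureTheory.integral_finset_sum]
  · apply Finset.sum_eq_zero
    intro j hj
    rw [MeasureTheory.integral_const_mul]
    rw [aux_integral_pair (v j) (-I) (him j hj) (by simp), mul_zero]
  · intro j hj
    exact (aux_integrable_pair (v j) (-I) (him j hj).ne (by simp)).const_mul _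

lemma aux_Gamma_ne_zero (z : ℂ) (hz : z.im ≠ 0) : Complex.Gamma z ≠ 0 :=
  Complex.Gamma_ne_zero fun m h => hz (by rw [h]; simp)

lemma aux_Gamma_shift (z : ℂ) (hz : z.im ≠ 0) (k : ℕ) :
    Complex.Gamma (z + k) = (∏ j ∈ Finset.range k, (z + j)) * Complex.Gamma z := by
  induction k with
  | zero => simp
  | succ k ih =>
    have hz' : z + k ≠ 0 := fun h => hz (by have := congrArg Complex.im h; simpa using this)
    have harg : z + ((k + 1 : ℕ) : ℂ) = (z + k) + 1 := by push_cast; ring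
    rw [harg, Complex.Gamma_add_one _ hz', ih, Finset.prod_range_succ]
    ring

lemma aux_diag (φ : ℝ → ℂ)
    (hφ : ∀ x : ℝ, φ x =
      Complex.Gamma ((x : ℂ) - 1 + I) / ((Real.sqrt π : ℂ) * Complex.Gamma ((x : ℂ) - I)))
    (n : ℤ) : ∫ x : ℝ, φ (x - n) * conj (φ (x - n)) = 1 := by
  have hs2 : (Real.sqrt π : ℂ) * (Real.sqrt π : ℂ) = (π : ℂ) := by
    rw [← Complex.ofReal_mul, Real.mul_self_sqrt Real.pi_pos.le]
  have hpt : ∀ x : ℝ, φ (x - n) * conj (φ (x - n))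
      = ((1 / (π * (1 + (x - ((n : ℝ) + 1)) ^ 2)) : ℝ) : ℂ) := by
    intro x
    set y : ℝ := x - (n : ℝ) with hy
    have hGp : Complex.Gamma ((y : ℂ) + I) = ((y : ℂ) - 1 + I) * Complex.Gamma ((y : ℂ) - 1 + I) := by
      have : (y : ℂ) + I = ((y : ℂ) - 1 + I) + 1 := by ring
      rw [this, Complex.Gamma_add_one _ (by
        intro h; have := congrArg Complex.im h; simp at this)]
    have hGm : Complex.Gamma ((y : ℂ) - I) = ((y : ℂ) - 1 - I) * Complex.Gamma ((y : ℂ) - 1 - I) := by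
      have : (y : ℂ) - I = ((y : ℂ) - 1 - I) + 1 := by ring
      rw [this, Complex.Gamma_add_one _ (by
        intro h; have := congrArg Complex.im h; simp at this)]
    have hconj : conj (φ y) = Complex.Gamma ((y : ℂ) - 1 - I)
        / ((Real.sqrt π : ℂ) * Complex.Gamma ((y : ℂ) + I)) := by
      rw [hφ y, map_div₀, map_mul, Complex.conj_ofReal, ← Complex.Gamma_conj, ← Complex.Gamma_conj]
      have h1 : conj ((y : ℂ) - 1 + I) = (y : ℂ) - 1 - I := by
        rw [map_add, map_sub, map_one, Complex.conj_ofReal, Complex.conj_I]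
        ring
      have h2 : conj ((y : ℂ) - I) = (y : ℂ) + I := by
        rw [map_sub, Complex.conj_ofReal, Complex.conj_I]
        ring
      rw [h1, h2]
    have hGp0 : Complex.Gamma ((y : ℂ) - 1 + I) ≠ 0 := aux_Gamma_ne_zero _ (by simp)
    have hGm0 : Complex.Gamma ((y : ℂ) - 1 - I) ≠ 0 := aux_Gamma_ne_zero _ (by simp)
    have hzp : ((y : ℂ) - 1 + I) ≠ 0 := by
      intro h; have := congrArg Complex.im h; simp at this
    have hzm : ((y : ℂ) - 1 - I) ≠ 0 := by
      intro h; have := congrArg Complex.im h; simp at this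
    have hsπ : (Real.sqrt π : ℂ) ≠ 0 := by
      simp [Real.sqrt_ne_zero'.mpr Real.pi_pos]
    have hx : x - ((n : ℝ) + 1) = y - 1 := by rw [hy]; ring
    rw [hconj, hφ y, hGp, hGm, div_mul_div_comm, hx]
    set Gp := Complex.Gamma ((y : ℂ) - 1 + I) with hGpdef
    set Gm := Complex.Gamma ((y : ℂ) - 1 - I) with hGmdef
    have hII : ((y : ℂ) - 1 - I) * ((y : ℂ) - 1 + I) = 1 + ((y : ℂ) - 1) ^ 2 := by
      have h := Complex.I_sq
      linear_combination -h
    have hden : ((Real.sqrt π : ℂ) * (((y : ℂ) - 1 - I) * Gm))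
        * ((Real.sqrt π : ℂ) * (((y : ℂ) - 1 + I) * Gp))
        = (Gp * Gm) * ((π : ℂ) * (1 + ((y : ℂ) - 1) ^ 2)) := by
      linear_combination (Gp * Gm * ((Real.sqrt π : ℂ) * (Real.sqrt π : ℂ))) * hII
        + (Gp * Gm * (1 + ((y : ℂ) - 1) ^ 2)) * hs2
    rw [hden, div_mul_cancel_left₀ (mul_ne_zero hGp0 hGm0)]
    push_cast
    rw [one_div]
  rw [MeasureTheory.integral_congr_ae (Filter.Eventually.of_forall hpt)]
  have hreal : ∫ a : ℝ, 1 / (π * (1 + (a - ((n : ℝ) + 1)) ^ 2)) = 1 := by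
    have h1 : ∫ a : ℝ, 1 / (π * (1 + (a - ((n : ℝ) + 1)) ^ 2))
        = ∫ a : ℝ, (fun u : ℝ => 1 / (π * (1 + u ^ 2))) (a - ((n : ℝ) + 1)) := rfl
    rw [h1, MeasureTheory.integral_sub_right_eq_self (fun u : ℝ => 1 / (π * (1 + u ^ 2)))]
    have h2 : (fun u : ℝ => 1 / (π * (1 + u ^ 2))) = fun u : ℝ => π⁻¹ * (1 + u ^ 2)⁻¹ := by
      funext u; rw [one_div, mul_inv]
    rw [h2, MeasureTheory.integral_const_mul, integral_univ_inv_one_add_sq,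
      inv_mul_cancel₀ Real.pi_ne_zero]
  calc ∫ a : ℝ, ((1 / (π * (1 + (a - ((n : ℝ) + 1)) ^ 2)) : ℝ) : ℂ)
      = ((∫ a : ℝ, 1 / (π * (1 + (a - ((n : ℝ) + 1)) ^ 2)) : ℝ) : ℂ) := integral_ofReal
    _ = 1 := by rw [hreal]; norm_num

open Polynomial in
lemma aux_cross (φ : ℝ → ℂ)
    (hφ : ∀ x : ℝ, φ x =
      Complex.Gamma ((x : ℂ) - 1 + I) / ((Real.sqrt π : ℂ) * Complex.Gamma ((x : ℂ) - I)))
    (m n : ℤ) (h : m < n) : ∫ x : ℝ, φ (x - n) * conj (φ (x - m)) = 0 := by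
  classical
  obtain ⟨k, hk'⟩ : ∃ k : ℕ, (k : ℤ) = n - m := ⟨(n - m).toNat, Int.toNat_of_nonneg (by omega)⟩
  have hk1 : 1 ≤ k := by omega
  have hkr : (k : ℝ) = (n : ℝ) - (m : ℝ) := by exact_mod_cast hk'
  set v : ℕ → ℂ := fun j => (k : ℂ) - j - I with hv
  set Np : ℂ[X] := C ((((Real.sqrt π : ℂ)) * ((Real.sqrt π : ℂ)))⁻¹)
      * ∏ j ∈ Finset.range (k - 1), (X - C ((k : ℂ) - 1 - j + I)) with hNp
  -- change of variables
  rw [← MeasureTheory.integral_add_right_eq_self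
    (fun x : ℝ => φ (x - n) * conj (φ (x - m))) ((m : ℝ) + 1)]
  have hpt : ∀ t : ℝ, (fun x : ℝ => φ (x - n) * conj (φ (x - m))) (t + ((m : ℝ) + 1))
      = Np.eval (t : ℂ) / ∏ j ∈ Finset.range (k + 1), ((t : ℂ) - v j) := by
    intro t
    simp only
    have e1 : t + ((m : ℝ) + 1) - (n : ℝ) = t - ((k : ℝ) - 1) := by rw [hkr]; ring
    have e2 : t + ((m : ℝ) + 1) - (m : ℝ) = t + 1 := by ring
    rw [e1, e2]
    have hsπ : (Real.sqrt π : ℂ) ≠ 0 := by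
      simp [Real.sqrt_ne_zero'.mpr Real.pi_pos]
    -- the two factors
    have hL : φ (t - ((k : ℝ) - 1)) = Complex.Gamma ((t : ℂ) - k + I)
        / ((Real.sqrt π : ℂ) * Complex.Gamma ((t : ℂ) - k + 1 - I)) := by
      rw [hφ]
      have a1 : ((t - ((k : ℝ) - 1) : ℝ) : ℂ) - 1 + I = (t : ℂ) - k + I := by
        push_cast; ring
      have a2 : ((t - ((k : ℝ) - 1) : ℝ) : ℂ) - I = (t : ℂ) - k + 1 - I := by
        push_cast; ring
      rw [a1, a2]
    have hR : conj (φ (t + 1)) = Complex.Gamma ((t : ℂ) - I)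
        / ((Real.sqrt π : ℂ) * Complex.Gamma ((t : ℂ) + 1 + I)) := by
      rw [hφ, map_div₀, map_mul, Complex.conj_ofReal, ← Complex.Gamma_conj, ← Complex.Gamma_conj]
      have a1 : conj (((t + 1 : ℝ) : ℂ) - 1 + I) = (t : ℂ) - I := by
        rw [map_add, map_sub, map_one, Complex.conj_ofReal, Complex.conj_I]
        push_cast; ring
      have a2 : conj (((t + 1 : ℝ) : ℂ) - I) = (t : ℂ) + 1 + I := by
        rw [map_sub, Complex.conj_ofReal, Complex.conj_I]
        push_cast; ring
      rw [a1, a2]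
    rw [hL, hR]
    -- Gamma expansions
    have hG1 : Complex.Gamma ((t : ℂ) + 1 + I)
        = (∏ j ∈ Finset.range (k + 1), ((t : ℂ) - k + I + j)) * Complex.Gamma ((t : ℂ) - k + I) := by
      have harg : (t : ℂ) + 1 + I = ((t : ℂ) - k + I) + ((k + 1 : ℕ) : ℂ) := by push_cast; ring
      rw [harg, aux_Gamma_shift _ (by simp) (k + 1)]
    have hG2 : Complex.Gamma ((t : ℂ) - I)
        = (∏ j ∈ Finset.range (k - 1), ((t : ℂ) - k + 1 - I + j)) * Complex.Gamma ((t : ℂ) - k + 1 - I) := by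
      have harg : (t : ℂ) - I = ((t : ℂ) - k + 1 - I) + ((k - 1 : ℕ) : ℂ) := by
        push_cast [Nat.cast_sub hk1]; ring
      rw [harg, aux_Gamma_shift _ (by simp) (k - 1)]
    rw [hG1, hG2]
    -- nonvanishing
    have hGz1 : Complex.Gamma ((t : ℂ) - k + I) ≠ 0 := aux_Gamma_ne_zero _ (by simp)
    have hGz2 : Complex.Gamma ((t : ℂ) - k + 1 - I) ≠ 0 := aux_Gamma_ne_zero _ (by simp)
    have hP1 : (∏ j ∈ Finset.range (k + 1), ((t : ℂ) - k + I + j)) ≠ 0 := by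
      rw [Finset.prod_ne_zero_iff]
      intro j _
      intro hzero
      have := congrArg Complex.im hzero
      simp at this
    -- evaluate Np and identify products
    have hNpe : Np.eval (t : ℂ) = (((Real.sqrt π : ℂ)) * ((Real.sqrt π : ℂ)))⁻¹
        * ∏ j ∈ Finset.range (k - 1), ((t : ℂ) - k + 1 - I + j) := by
      rw [hNp, eval_mul, eval_C, eval_prod]
      congr 1
      apply Finset.prod_congr rfl
      intro j _
      rw [eval_sub, eval_X, eval_C]
      ring
    have hD : ∏ j ∈ Finset.range (k + 1), ((t : ℂ) - v j)
        = ∏ j ∈ Finset.range (k + 1), ((t : ℂ) - k + I + j) := by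
      apply Finset.prod_congr rfl
      intro j _
      rw [hv]
      ring
    rw [hNpe, hD]
    field_simp
  rw [MeasureTheory.integral_congr_ae (Filter.Eventually.of_forall hpt)]
  apply aux_partial_fractions _ Finset.nonempty_range_add_one v _ _ Np _
  · intro a ha b hb hab
    have := congrArg Complex.re hab
    simp [hv] at this
    exact_mod_cast this
  · intro j _
    simp [hv]
  · have hsπ : ((((Real.sqrt π : ℂ)) * ((Real.sqrt π : ℂ)))⁻¹ : ℂ) ≠ 0 := by
      simp [Real.sqrt_ne_zero'.mpr Real.pi_pos]
    have hdeg1 : (∏ j ∈ Finset.range (k - 1), (X - C ((k : ℂ) - 1 - j + I))).degree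
        ≤ ((k - 1 : ℕ) : WithBot ℕ) := by
      calc (∏ j ∈ Finset.range (k - 1), (X - C ((k : ℂ) - 1 - j + I))).degree
          ≤ ∑ j ∈ Finset.range (k - 1), (X - C ((k : ℂ) - 1 - j + I)).degree :=
            degree_prod_le _ _
        _ ≤ ∑ j ∈ Finset.range (k - 1), (1 : WithBot ℕ) := by
            apply Finset.sum_le_sum
            intro i _
            exact (degree_X_sub_C _).le
        _ = ((k - 1 : ℕ) : WithBot ℕ) := by
            rw [Finset.sum_const, Finset.card_range]
            simp [nsmul_eq_mul, mul_one]
    have hdegNp : Np.degree ≤ ((k - 1 : ℕ) : WithBot ℕ) := by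
      calc Np.degree ≤ (C ((((Real.sqrt π : ℂ)) * ((Real.sqrt π : ℂ)))⁻¹)).degree
          + (∏ j ∈ Finset.range (k - 1), (X - C ((k : ℂ) - 1 - j + I))).degree := by
            rw [hNp]; exact degree_mul_le _ _
        _ ≤ 0 + ((k - 1 : ℕ) : WithBot ℕ) := add_le_add degree_C_le hdeg1
        _ = ((k - 1 : ℕ) : WithBot ℕ) := zero_add _
    apply lt_of_le_of_lt hdegNp
    rw [Finset.card_range]
    rw [Nat.cast_lt]
    omega

/-- The integer translates of `φ(x) = Γ(x−1+i)/(√π·Γ(x−i))` form an orthonormal system in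
`L²(ℝ)`: `∫_ℝ φ(x−n)·conj(φ(x−m)) dx = δ_{mn}` for all integers `m, n`. -/
theorem gamma_translates_orthonormal (φ : ℝ → ℂ)
    (hφ : ∀ x : ℝ, φ x =
      Complex.Gamma ((x : ℂ) - 1 + I) / ((Real.sqrt π : ℂ) * Complex.Gamma ((x : ℂ) - I))) :
    ∀ m n : ℤ, ∫ x : ℝ, φ (x - n) * conj (φ (x - m)) = if m = n then 1 else 0 := by
  intro m n
  rcases lt_trichotomy m n with hlt | heq | hgt
  · rw [if_neg (ne_of_lt hlt)]
    exact aux_cross φ hφ m n hlt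
  · rw [if_pos heq, heq]
    exact aux_diag φ hφ n
  · rw [if_neg (ne_of_gt hgt)]
    have hswap : (fun x : ℝ => φ (x - n) * conj (φ (x - m)))
        = fun x : ℝ => conj (φ (x - m) * conj (φ (x - n))) := by
      funext x
      rw [map_mul, Complex.conj_conj, mul_comm]
    rw [hswap, integral_conj, aux_cross φ hφ n m hgt, map_zero]
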